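/- arXiv:1505.00150 — 3 statements merged into one kernel-verified Lean document; each statement's English description precedes it below -/
import Mathlib

section
/- Let T>0, E a Banach space, and let {R^{(λ)}}_{λ∈[0,1]} be a continuous family of evolution systems on E. Define Σ : E × L¹([0,T],E) × [0,1] → C([0,T],E) by Σ(x,w,λ)(t) := R^{(λ)}(t,0)x + ∫_0^t R^{(λ)}(t,s) w(s) ds. Then Σ is continuous. -/
open Filter Topology Set MeasureTheory

noncomputable section

variable {E : Type*} [NormedAddCommGroup E] [NormedSpace ℝ E]

/-- An evolution system `{R(t,s)}_{0 ≤ s ≤ t ≤ T}` on `E`. -/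
structure IsEvolutionSystem (T : ℝ) (R : ℝ → ℝ → E →L[ℝ] E) : Prop where
  refl : ∀ t ∈ Icc (0 : ℝ) T, R t t = 1
  comp : ∀ ⦃s r t : ℝ⦄, 0 ≤ s → s ≤ r → r ≤ t → t ≤ T → R t s = (R t r).comp (R r s)
  strong_cont : ∀ x : E, ContinuousOn (fun p : ℝ × ℝ => R p.1 p.2 x)
    {p : ℝ × ℝ | 0 ≤ p.2 ∧ p.2 ≤ p.1 ∧ p.1 ≤ T}

/-- The parameter domain `{(t,s) : 0 ≤ s ≤ t ≤ T}` of an evolution system. -/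
def evolDomain (T : ℝ) : Set (ℝ × ℝ) := {p : ℝ × ℝ | 0 ≤ p.2 ∧ p.2 ≤ p.1 ∧ p.1 ≤ T}

/-- A family `{R^{(λ)}}_{λ∈[0,1]}` of evolution systems is continuous: for every `x ∈ E`
and every sequence `λₙ → λ₀` in `[0,1]`, `R^{(λₙ)}(t,s)x → R^{(λ₀)}(t,s)x` uniformly in
`0 ≤ s ≤ t ≤ T`. -/
def IsContinuousEvolFamily (T : ℝ) (R : ℝ → ℝ → ℝ → E →L[ℝ] E) : Prop :=
  ∀ (x : E) (l : ℕ → ℝ) (l0 : ℝ), (∀ n, l n ∈ Icc (0 : ℝ) 1) → l0 ∈ Icc (0 : ℝ) 1 →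
    Tendsto l atTop (𝓝 l0) →
    TendstoUniformlyOn (fun n p => R (l n) p.1 p.2 x) (fun p => R l0 p.1 p.2 x)
      atTop (evolDomain T)

/-- The map `Σ(x,w,λ)(t) = R^{(λ)}(t,0)x + ∫₀ᵗ R^{(λ)}(t,s) w(s) ds`. -/
def evolMap (R : ℝ → ℝ → E →L[ℝ] E) (x : E) (w : ℝ → E) (t : ℝ) : E :=
  R t 0 x + ∫ s in (0 : ℝ)..t, R t s (w s)

/-- The Hausdorff measure of noncompactness of a set `Q`. -/
def hausdorffMNC (Q : Set E) : ℝ :=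
  sInf {r : ℝ | 0 < r ∧ ∃ c : Finset E, Q ⊆ ⋃ y ∈ c, Metric.ball y r}

lemma evolDomain_compact (T : ℝ) : IsCompact (evolDomain T) := by
  have hclosed : IsClosed (evolDomain T) := by
    have : evolDomain T = {p : ℝ × ℝ | 0 ≤ p.2} ∩ ({p | p.2 ≤ p.1} ∩ {p | p.1 ≤ T}) := by
      ext p; simp [evolDomain, and_assoc]
    rw [this]
    exact (isClosed_le continuous_const continuous_snd).inter
      ((isClosed_le continuous_snd continuous_fst).inter
        (isClosed_le continuous_fst continuous_const))
  refine IsCompact.of_isClosed_subset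
    ((isCompact_Icc (a := (0:ℝ)) (b := T)).prod (isCompact_Icc (a := (0:ℝ)) (b := T)))
    hclosed ?_
  rintro ⟨t, s⟩ ⟨h1, h2, h3⟩
  exact ⟨⟨le_trans h1 h2, h3⟩, ⟨h1, le_trans h2 h3⟩⟩

lemma exists_unif_bound [CompleteSpace E] {T : ℝ} {R : ℝ → ℝ → ℝ → E →L[ℝ] E}
    (hES : ∀ l ∈ Icc (0:ℝ) 1, IsEvolutionSystem T (R l))
    (hcont : IsContinuousEvolFamily T R)
    (lam : ℕ → ℝ) (lam0 : ℝ) (hlam : ∀ n, lam n ∈ Icc (0:ℝ) 1) (hlam0 : lam0 ∈ Icc (0:ℝ) 1)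
    (hlamlim : Tendsto lam atTop (𝓝 lam0)) :
    ∃ M : ℝ, 1 ≤ M ∧ (∀ n, ∀ p ∈ evolDomain T, ‖R (lam n) p.1 p.2‖ ≤ M) ∧
      (∀ p ∈ evolDomain T, ‖R lam0 p.1 p.2‖ ≤ M) := by
  classical
  set lam' : Option ℕ → ℝ := fun o => o.elim lam0 lam with hlam'
  have hlam'mem : ∀ o, lam' o ∈ Icc (0:ℝ) 1 := by
    rintro (_ | n); · exact hlam0
    · exact hlam n
  set g : Option ℕ × (evolDomain T) → E →L[ℝ] E :=
    fun i => R (lam' i.1) i.2.1.1 i.2.1.2 with hg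
  have hbdd : ∀ x : E, ∃ C : ℝ, ∀ i, ‖g i x‖ ≤ C := by
    intro x
    have hb : ∀ l ∈ Icc (0:ℝ) 1, ∃ C, ∀ p ∈ evolDomain T, ‖R l p.1 p.2 x‖ ≤ C := by
      intro l hl
      exact (evolDomain_compact T).exists_bound_of_continuousOn ((hES l hl).strong_cont x)
    have huc := (Metric.tendstoUniformlyOn_iff.mp
      (hcont x lam lam0 hlam hlam0 hlamlim)) 1 one_pos
    obtain ⟨N, hN⟩ := Filter.eventually_atTop.mp huc
    obtain ⟨C0, hC0⟩ := hb lam0 hlam0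
    choose B hB using fun n => hb (lam n) (hlam n)
    set C : ℝ := max (C0 + 1) ((Finset.range (N + 1)).sup' (by simp) fun n => B n)
    refine ⟨C, ?_⟩
    rintro ⟨(_ | n), ⟨p, hp⟩⟩
    · exact le_trans (hC0 p hp) (le_trans (by linarith) (le_max_left _ _))
    · rcases le_or_gt n N with hn | hn
      · refine le_trans (hB n p hp) (le_trans ?_ (le_max_right _ _))
        exact Finset.le_sup' _ (Finset.mem_range.mpr (Nat.lt_succ_of_le hn))
      · have := hN n hn.le p hp
        rw [dist_eq_norm] at this
        have : ‖R (lam n) p.1 p.2 x‖ ≤ ‖R lam0 p.1 p.2 x‖ + 1 := by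
          have h2 : ‖R (lam n) p.1 p.2 x‖ - ‖R lam0 p.1 p.2 x‖ ≤
              ‖R lam0 p.1 p.2 x - R (lam n) p.1 p.2 x‖ := by
            rw [norm_sub_rev]; exact norm_sub_norm_le _ _
          linarith
        exact le_trans this (le_trans (by have := hC0 p hp; linarith) (le_max_left _ _))
  obtain ⟨C', hC'⟩ := banach_steinhaus hbdd
  refine ⟨max C' 1, le_max_right _ _, ?_, ?_⟩
  · intro n p hp
    exact le_trans (hC' (some n, ⟨p, hp⟩)) (le_max_left _ _)
  · intro p hp
    exact le_trans (hC' (none, ⟨p, hp⟩)) (le_max_left _ _)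

lemma continuous_apply_op {X : Type*} [TopologicalSpace X]
    (L : X → E →L[ℝ] E) (M : ℝ) (hM : ∀ x, ‖L x‖ ≤ M)
    (hc : ∀ y, Continuous fun x => L x y) :
    Continuous fun p : X × E => L p.1 p.2 := by
  rw [continuous_iff_continuousAt]
  rintro ⟨x0, y0⟩
  rw [ContinuousAt, tendsto_iff_norm_sub_tendsto_zero]
  have h1 : Tendsto (fun p : X × E => M * ‖p.2 - y0‖ + ‖L p.1 y0 - L x0 y0‖)
      (𝓝 (x0, y0)) (𝓝 (M * ‖y0 - y0‖ + ‖L x0 y0 - L x0 y0‖)) := by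
    exact ((continuous_const.mul ((continuous_snd.sub continuous_const).norm)).add
      ((((hc y0).comp continuous_fst).sub continuous_const).norm)).tendsto _
  have h1' : Tendsto (fun p : X × E => M * ‖p.2 - y0‖ + ‖L p.1 y0 - L x0 y0‖)
      (𝓝 (x0, y0)) (𝓝 0) := by simpa using h1
  refine squeeze_zero (fun p => norm_nonneg _) (fun p => ?_) h1'
  calc ‖L p.1 p.2 - L x0 y0‖
      ≤ ‖L p.1 p.2 - L p.1 y0‖ + ‖L p.1 y0 - L x0 y0‖ := norm_sub_le_norm_sub_add_norm_sub _ _ _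
    _ ≤ M * ‖p.2 - y0‖ + ‖L p.1 y0 - L x0 y0‖ := by
        refine add_le_add ?_ (le_refl _)
        rw [← map_sub]
        exact le_trans ((L p.1).le_opNorm _) (mul_le_mul_of_nonneg_right (hM _) (norm_nonneg _))

lemma integrableOn_op {T : ℝ} {Q : ℝ → ℝ → E →L[ℝ] E}
    (hsc : ∀ x : E, ContinuousOn (fun p : ℝ × ℝ => Q p.1 p.2 x) (evolDomain T))
    {M : ℝ} (hM : ∀ p ∈ evolDomain T, ‖Q p.1 p.2‖ ≤ M)
    {u : ℝ → E} (hu : IntegrableOn u (Icc 0 T))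
    {t : ℝ} (ht : t ∈ Icc (0:ℝ) T) :
    IntegrableOn (fun s => Q t s (u s)) (Ioc 0 t) := by
  set proj : ℝ → ℝ := fun s => max 0 (min s t) with hproj
  have hprojmem : ∀ s, (t, proj s) ∈ evolDomain T := by
    intro s
    refine ⟨le_max_left _ _, ?_, ht.2⟩
    exact max_le ht.1 (min_le_right s t)
  set L : ℝ → E →L[ℝ] E := fun s => Q t (proj s) with hL
  have hLb : ∀ s, ‖L s‖ ≤ M := fun s => hM _ (hprojmem s)
  have hLc : ∀ y, Continuous fun s => L s y := by
    intro y
    have hcproj : Continuous fun s => ((t, proj s) : ℝ × ℝ) :=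
      continuous_const.prodMk (continuous_const.max (continuous_id.min continuous_const))
    exact (hsc y).comp_continuous hcproj hprojmem
  have hjoint : Continuous fun p : ℝ × E => L p.1 p.2 := continuous_apply_op L M hLb hLc
  have huIoc : IntegrableOn u (Ioc 0 t) :=
    hu.mono_set (fun s hs => ⟨hs.1.le, le_trans hs.2 ht.2⟩)
  have hmeas : AEStronglyMeasurable (fun s => L s (u s)) (volume.restrict (Ioc 0 t)) :=
    hjoint.comp_aestronglyMeasurable (aestronglyMeasurable_id.prodMk huIoc.aestronglyMeasurable)
  have heq : ∀ᵐ s ∂(volume.restrict (Ioc 0 t)), L s (u s) = Q t s (u s) := by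
    refine (ae_restrict_iff' measurableSet_Ioc).mpr (ae_of_all _ fun s hs => ?_)
    have : proj s = s := by
      rw [hproj]
      simp only [min_eq_left hs.2, max_eq_right hs.1.le]
    rw [hL]; simp only [this]
  have hmeas' : AEStronglyMeasurable (fun s => Q t s (u s)) (volume.restrict (Ioc 0 t)) :=
    hmeas.congr heq
  refine Integrable.mono' ((huIoc.norm).const_mul M) hmeas' ?_
  refine (ae_restrict_iff' measurableSet_Ioc).mpr (ae_of_all _ fun s hs => ?_)
  have hp : ((t, s) : ℝ × ℝ) ∈ evolDomain T := ⟨hs.1.le, hs.2, ht.2⟩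
  exact le_trans ((Q t s).le_opNorm _) (mul_le_mul_of_nonneg_right (hM _ hp) (norm_nonneg _))

/-- Proposition 1(i): the operator
`Σ(x,w,λ)(t) = R^{(λ)}(t,0)x + ∫₀ᵗ R^{(λ)}(t,s)w(s)ds` is continuous from
`E × L¹([0,T],E) × [0,1]` to `C([0,T],E)`, expressed sequentially: if `xₙ → x₀` in `E`,
`wₙ → w₀` in `L¹([0,T],E)` and `λₙ → λ₀` in `[0,1]`, then `Σ(xₙ,wₙ,λₙ) → Σ(x₀,w₀,λ₀)`
uniformly on `[0,T]`. -/
theorem statement_3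
    {E : Type*} [NormedAddCommGroup E] [NormedSpace ℝ E] [CompleteSpace E]
    (T : ℝ) (hT : 0 < T)
    (R : ℝ → ℝ → ℝ → E →L[ℝ] E)
    (hES : ∀ lam ∈ Icc (0 : ℝ) 1, IsEvolutionSystem T (R lam))
    (hcont : IsContinuousEvolFamily T R)
    (x : ℕ → E) (x0 : E) (hx : Tendsto x atTop (𝓝 x0))
    (w : ℕ → ℝ → E) (w0 : ℝ → E)
    (hwint : ∀ n, IntegrableOn (w n) (Icc (0 : ℝ) T))
    (hw0int : IntegrableOn w0 (Icc (0 : ℝ) T))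
    (hw : Tendsto (fun n => ∫ t in Icc (0 : ℝ) T, ‖w n t - w0 t‖) atTop (𝓝 0))
    (lam : ℕ → ℝ) (lam0 : ℝ)
    (hlam : ∀ n, lam n ∈ Icc (0 : ℝ) 1) (hlam0 : lam0 ∈ Icc (0 : ℝ) 1)
    (hlamlim : Tendsto lam atTop (𝓝 lam0)) :
    TendstoUniformlyOn (fun n t => evolMap (R (lam n)) (x n) (w n) t)
      (evolMap (R lam0) x0 w0) atTop (Icc (0 : ℝ) T) := by
  classical
  obtain ⟨M, hM1, hMn, hM0⟩ := exists_unif_bound hES hcont lam lam0 hlam hlam0 hlamlim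
  have hMpos : (0:ℝ) < M := lt_of_lt_of_le one_pos hM1
  rw [Metric.tendstoUniformlyOn_iff]
  intro ε hε
  set δ : ℝ := ε / (8 * M) with hδ
  have hδpos : 0 < δ := div_pos hε (by positivity)
  have hε8 : (0:ℝ) < ε / 8 := by positivity
  set εT : ℝ := ε / (8 * (T + 1)) with hεT
  have hεTpos : 0 < εT := div_pos hε (by positivity)
  have hMδ : M * δ = ε / 8 := by
    rw [hδ]; field_simp
  have hTεT : T * εT ≤ ε / 8 := by
    rw [hεT, mul_div_assoc']
    rw [div_le_div_iff₀ (by positivity) (by norm_num)]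
    nlinarith [hε.le, hT.le]
  -- simple function approximation of w0
  have hmem : MemLp w0 1 (volume.restrict (Icc (0:ℝ) T)) := memLp_one_iff_integrable.mpr hw0int
  obtain ⟨v, hv1, hv2⟩ := hmem.exists_simpleFunc_eLpNorm_sub_lt ENNReal.one_ne_top
    (ε := ENNReal.ofReal δ) (ENNReal.ofReal_pos.mpr hδpos).ne'
  have hvi : IntegrableOn v (Icc (0:ℝ) T) := memLp_one_iff_integrable.mp hv2
  have hsubint : IntegrableOn (fun s => w0 s - v s) (Icc (0:ℝ) T) := hw0int.sub hvi
  have hηint : ∫ s in Icc (0:ℝ) T, ‖w0 s - v s‖ < δ := by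
    have h1 : ENNReal.ofReal (∫ s in Icc (0:ℝ) T, ‖w0 s - v s‖) =
        ∫⁻ s in Icc (0:ℝ) T, ‖w0 s - v s‖₊ :=
      ofReal_integral_norm_eq_lintegral_enorm hsubint
    have h2 : eLpNorm (w0 - ⇑v) 1 (volume.restrict (Icc (0:ℝ) T)) =
        ∫⁻ s in Icc (0:ℝ) T, ‖w0 s - v s‖₊ := by
      rw [eLpNorm_one_eq_lintegral_enorm]; rfl
    rw [h2, ← h1] at hv1
    exact (ENNReal.ofReal_lt_ofReal_iff hδpos).mp hv1
  -- eventual facts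
  have E1 : ∀ᶠ n in atTop, dist (x n) x0 < δ := Metric.tendsto_nhds.mp hx δ hδpos
  have E2 : ∀ᶠ n in atTop, ∀ p ∈ evolDomain T,
      dist (R lam0 p.1 p.2 x0) (R (lam n) p.1 p.2 x0) < ε / 8 :=
    Metric.tendstoUniformlyOn_iff.mp (hcont x0 lam lam0 hlam hlam0 hlamlim) _ hε8
  have E3 : ∀ᶠ n in atTop, (∫ s in Icc (0:ℝ) T, ‖w n s - w0 s‖) < δ := by
    filter_upwards [Metric.tendsto_nhds.mp hw δ hδpos] with n hn
    rw [Real.dist_eq, sub_zero] at hn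
    exact lt_of_le_of_lt (le_abs_self _) hn
  have E4 : ∀ᶠ n in atTop, ∀ y ∈ v.range, ∀ p ∈ evolDomain T,
      dist (R lam0 p.1 p.2 y) (R (lam n) p.1 p.2 y) < εT := by
    rw [Filter.eventually_all_finset]
    intro y _
    exact Metric.tendstoUniformlyOn_iff.mp (hcont y lam lam0 hlam hlam0 hlamlim) _ hεTpos
  filter_upwards [E1, E2, E3, E4] with n h1 h2 h3 h4
  intro t ht
  have hIocsub : Ioc (0:ℝ) t ⊆ Icc (0:ℝ) T := fun s hs => ⟨hs.1.le, le_trans hs.2 ht.2⟩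
  have hsc0 := (hES lam0 hlam0).strong_cont
  have hscn := (hES (lam n) (hlam n)).strong_cont
  have i1 : IntegrableOn (fun s => R lam0 t s (w0 s)) (Ioc 0 t) :=
    integrableOn_op hsc0 hM0 hw0int ht
  have i2 : IntegrableOn (fun s => R (lam n) t s (w0 s)) (Ioc 0 t) :=
    integrableOn_op hscn (hMn n) hw0int ht
  have i3 : IntegrableOn (fun s => R (lam n) t s (w n s)) (Ioc 0 t) :=
    integrableOn_op hscn (hMn n) (hwint n) ht
  have i4 : IntegrableOn (fun s => R (lam n) t s (w0 s - w n s)) (Ioc 0 t) :=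
    integrableOn_op hscn (hMn n) (hw0int.sub (hwint n)) ht
  rw [dist_eq_norm, evolMap, evolMap,
    intervalIntegral.integral_of_le ht.1, intervalIntegral.integral_of_le ht.1]
  have hpt0 : ((t, 0) : ℝ × ℝ) ∈ evolDomain T := ⟨le_refl 0, ht.1, ht.2⟩
  -- A-part bounds
  have hAeq : R lam0 t 0 x0 - R (lam n) t 0 (x n)
      = (R lam0 t 0 x0 - R (lam n) t 0 x0) + R (lam n) t 0 (x0 - x n) := by
    rw [map_sub]; abel
  have n1 : ‖R lam0 t 0 x0 - R (lam n) t 0 (x n)‖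
      ≤ ‖R lam0 t 0 x0 - R (lam n) t 0 x0‖ + ‖R (lam n) t 0 (x0 - x n)‖ := by
    rw [hAeq]; exact norm_add_le _ _
  have n2 : ‖R lam0 t 0 x0 - R (lam n) t 0 x0‖ < ε / 8 := by
    have := h2 (t, 0) hpt0; rwa [dist_eq_norm] at this
  have n3 : ‖R (lam n) t 0 (x0 - x n)‖ ≤ M * dist (x n) x0 := by
    have hd : ‖x0 - x n‖ = dist (x n) x0 := by rw [dist_eq_norm, norm_sub_rev]
    rw [← hd]
    exact le_trans ((R (lam n) t 0).le_opNorm _)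
      (mul_le_mul_of_nonneg_right (hMn n (t, 0) hpt0) (norm_nonneg _))
  have n4 : M * dist (x n) x0 < M * δ := by
    exact mul_lt_mul_of_pos_left h1 hMpos
  -- B-part decomposition
  have hBeq : (∫ s in Ioc (0:ℝ) t, R lam0 t s (w0 s)) - ∫ s in Ioc (0:ℝ) t, R (lam n) t s (w n s)
      = (∫ s in Ioc (0:ℝ) t, (R lam0 t s (w0 s) - R (lam n) t s (w0 s)))
        + ∫ s in Ioc (0:ℝ) t, R (lam n) t s (w0 s - w n s) := by
    have isub : IntegrableOn (fun s => R lam0 t s (w0 s) - R (lam n) t s (w0 s))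
        (Ioc (0:ℝ) t) := i1.sub i2
    rw [← integral_sub i1 i3, ← integral_add isub i4]
    refine setIntegral_congr_fun measurableSet_Ioc fun s _ => ?_
    simp only [map_sub]
    abel
  -- B1 bound
  have m1 : ‖∫ s in Ioc (0:ℝ) t, (R lam0 t s (w0 s) - R (lam n) t s (w0 s))‖
      ≤ ∫ s in Ioc (0:ℝ) t, ‖R lam0 t s (w0 s) - R (lam n) t s (w0 s)‖ :=
    norm_integral_le_integral_norm _
  have hgint : IntegrableOn (fun s => 2 * M * ‖w0 s - v s‖ + εT) (Ioc (0:ℝ) t) := by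
    refine Integrable.add (IntegrableOn.mono_set (hsubint.norm.const_mul (2 * M)) hIocsub) ?_
    exact integrableOn_const measure_Ioc_lt_top.ne
  have m2 : ∫ s in Ioc (0:ℝ) t, ‖R lam0 t s (w0 s) - R (lam n) t s (w0 s)‖
      ≤ ∫ s in Ioc (0:ℝ) t, (2 * M * ‖w0 s - v s‖ + εT) := by
    refine setIntegral_mono_on (i1.sub i2).norm hgint measurableSet_Ioc fun s hs => ?_
    have hp : ((t, s) : ℝ × ℝ) ∈ evolDomain T := ⟨hs.1.le, hs.2, ht.2⟩
    have e0 : R lam0 t s (w0 s) - R (lam n) t s (w0 s)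
        = (R lam0 t s (w0 s - v s) - R (lam n) t s (w0 s - v s))
          + (R lam0 t s (v s) - R (lam n) t s (v s)) := by
      rw [map_sub, map_sub]; abel
    have e1 : ‖R lam0 t s (w0 s - v s)‖ ≤ M * ‖w0 s - v s‖ :=
      le_trans ((R lam0 t s).le_opNorm _)
        (mul_le_mul_of_nonneg_right (hM0 (t, s) hp) (norm_nonneg _))
    have e2 : ‖R (lam n) t s (w0 s - v s)‖ ≤ M * ‖w0 s - v s‖ :=
      le_trans ((R (lam n) t s).le_opNorm _)
        (mul_le_mul_of_nonneg_right (hMn n (t, s) hp) (norm_nonneg _))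
    have e3 : ‖R lam0 t s (v s) - R (lam n) t s (v s)‖ < εT := by
      have := h4 (v s) (v.mem_range_self s) (t, s) hp
      rwa [dist_eq_norm] at this
    calc ‖R lam0 t s (w0 s) - R (lam n) t s (w0 s)‖
        ≤ ‖R lam0 t s (w0 s - v s) - R (lam n) t s (w0 s - v s)‖
          + ‖R lam0 t s (v s) - R (lam n) t s (v s)‖ := by rw [e0]; exact norm_add_le _ _
      _ ≤ (‖R lam0 t s (w0 s - v s)‖ + ‖R (lam n) t s (w0 s - v s)‖)
          + ‖R lam0 t s (v s) - R (lam n) t s (v s)‖ :=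
          add_le_add (norm_sub_le _ _) (le_refl _)
      _ ≤ 2 * M * ‖w0 s - v s‖ + εT := by nlinarith [e1, e2, e3]
  have m3 : ∫ s in Ioc (0:ℝ) t, (2 * M * ‖w0 s - v s‖ + εT)
      = 2 * M * (∫ s in Ioc (0:ℝ) t, ‖w0 s - v s‖) + t * εT := by
    rw [integral_add (IntegrableOn.mono_set (hsubint.norm.const_mul (2 * M)) hIocsub)
      (integrableOn_const measure_Ioc_lt_top.ne),
      integral_const_mul, setIntegral_const]
    congr 1
    rw [Real.volume_real_Ioc_of_le ht.1, sub_zero, smul_eq_mul]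
  have m4 : ∫ s in Ioc (0:ℝ) t, ‖w0 s - v s‖ ≤ ∫ s in Icc (0:ℝ) T, ‖w0 s - v s‖ := by
    refine setIntegral_mono_set hsubint.norm ?_ hIocsub.eventuallyLE
    exact ae_of_all _ fun s => norm_nonneg _
  have m7 : 2 * M * (∫ s in Ioc (0:ℝ) t, ‖w0 s - v s‖) ≤ 2 * M * δ :=
    mul_le_mul_of_nonneg_left (le_trans m4 hηint.le) (by positivity)
  have m6 : t * εT ≤ T * εT := mul_le_mul_of_nonneg_right ht.2 hεTpos.le
  -- B2 bound
  have k1 : ‖∫ s in Ioc (0:ℝ) t, R (lam n) t s (w0 s - w n s)‖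
      ≤ ∫ s in Ioc (0:ℝ) t, ‖R (lam n) t s (w0 s - w n s)‖ :=
    norm_integral_le_integral_norm _
  have hkint : IntegrableOn (fun s => M * ‖w n s - w0 s‖) (Icc (0:ℝ) T) :=
    ((hwint n).sub hw0int).norm.const_mul M
  have k2 : ∫ s in Ioc (0:ℝ) t, ‖R (lam n) t s (w0 s - w n s)‖
      ≤ ∫ s in Ioc (0:ℝ) t, M * ‖w n s - w0 s‖ := by
    refine setIntegral_mono_on i4.norm (IntegrableOn.mono_set hkint hIocsub) measurableSet_Ioc fun s hs => ?_
    have hp : ((t, s) : ℝ × ℝ) ∈ evolDomain T := ⟨hs.1.le, hs.2, ht.2⟩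
    have : ‖w0 s - w n s‖ = ‖w n s - w0 s‖ := norm_sub_rev _ _
    rw [← this]
    exact le_trans ((R (lam n) t s).le_opNorm _)
      (mul_le_mul_of_nonneg_right (hMn n (t, s) hp) (norm_nonneg _))
  have k3 : ∫ s in Ioc (0:ℝ) t, M * ‖w n s - w0 s‖ ≤ ∫ s in Icc (0:ℝ) T, M * ‖w n s - w0 s‖ := by
    refine setIntegral_mono_set hkint ?_ hIocsub.eventuallyLE
    exact ae_of_all _ fun s => by positivity
  have k4 : ∫ s in Icc (0:ℝ) T, M * ‖w n s - w0 s‖ = M * ∫ s in Icc (0:ℝ) T, ‖w n s - w0 s‖ :=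
    integral_const_mul _ _
  have k5 : M * (∫ s in Icc (0:ℝ) T, ‖w n s - w0 s‖) < M * δ :=
    mul_lt_mul_of_pos_left h3 hMpos
  -- combine
  have hgrp : (R lam0 t 0 x0 + ∫ s in Ioc (0:ℝ) t, R lam0 t s (w0 s))
      - (R (lam n) t 0 (x n) + ∫ s in Ioc (0:ℝ) t, R (lam n) t s (w n s))
      = (R lam0 t 0 x0 - R (lam n) t 0 (x n))
        + ((∫ s in Ioc (0:ℝ) t, R lam0 t s (w0 s))
            - ∫ s in Ioc (0:ℝ) t, R (lam n) t s (w n s)) := by abel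
  rw [hgrp, hBeq]
  have final1 := norm_add_le (R lam0 t 0 x0 - R (lam n) t 0 (x n))
    ((∫ s in Ioc (0:ℝ) t, (R lam0 t s (w0 s) - R (lam n) t s (w0 s)))
      + ∫ s in Ioc (0:ℝ) t, R (lam n) t s (w0 s - w n s))
  have final2 := norm_add_le (∫ s in Ioc (0:ℝ) t, (R lam0 t s (w0 s) - R (lam n) t s (w0 s)))
    (∫ s in Ioc (0:ℝ) t, R (lam n) t s (w0 s - w n s))
  linarith
end
end

section
/- Let T>0, E a Banach space, {R^{(λ)}}_{λ∈[0,1]} a continuous family of evolution systems on E, and define Σ : E × L¹([0,T],E) × [0,1] → C([0,T],E) by Σ(x,w,λ)(t) := R^{(λ)}(t,0)x + ∫_0^t R^{(λ)}(t,s) w(s) ds. If K⊂E is relatively compact and W⊂L¹([0,T],E) is such that there exists c∈L¹([0,T],ℝ) with ‖w(t)‖≤c(t) for every w∈W and almost every t∈[0,T], then the set Σ(K×W×[0,1]) is relatively compact in C([0,T],E) if and only if for every t∈[0,T] the set {u(t) : u∈Σ(K×W×[0,1])} is relatively compact in E. -/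
open Filter Topology Set MeasureTheory

noncomputable section

variable {E : Type*} [NormedAddCommGroup E] [NormedSpace ℝ E]

omit [NormedSpace ℝ E] in
lemma evol_norm_le_of_dist {a b : E} {B : ℝ} (h1 : ‖a‖ ≤ B) (h2 : dist a b < 1) :
    ‖b‖ ≤ B + 1 := by
  have h3 : ‖b‖ ≤ ‖a‖ + dist a b := by
    rw [dist_eq_norm]
    have h : a - (a - b) = b := by abel
    calc ‖b‖ = ‖a - (a - b)‖ := by rw [h]
      _ ≤ ‖a‖ + ‖a - b‖ := norm_sub_le _ _
  linarith

/-- Uniform boundedness of a continuous family of evolution systems. -/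
lemma evol_bound [CompleteSpace E] (T : ℝ) (R : ℝ → ℝ → ℝ → E →L[ℝ] E)
    (hES : ∀ lam ∈ Icc (0 : ℝ) 1, IsEvolutionSystem T (R lam))
    (hcont : IsContinuousEvolFamily T R) :
    ∃ M : ℝ, 0 ≤ M ∧ ∀ lam ∈ Icc (0 : ℝ) 1, ∀ p ∈ evolDomain T, ‖R lam p.1 p.2‖ ≤ M := by
  set ι := {q : ℝ × (ℝ × ℝ) // q.1 ∈ Icc (0 : ℝ) 1 ∧ q.2 ∈ evolDomain T}
  set g : ι → E →L[ℝ] E := fun q => R q.1.1 q.1.2.1 q.1.2.2 with hg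
  have hpt : ∀ x : E, ∃ C, ∀ i : ι, ‖g i x‖ ≤ C := by
    intro x
    by_contra hcon
    push_neg at hcon
    choose q hq using fun n : ℕ => hcon n
    obtain ⟨l0, hl0, φ, hφ, hconv⟩ :=
      (isCompact_Icc : IsCompact (Icc (0:ℝ) 1)).tendsto_subseq
        (x := fun n => (q n).1.1) (fun n => (q n).2.1)
    have hconv' : Tendsto (fun n => (q (φ n)).1.1) atTop (𝓝 l0) := hconv
    have hTU := hcont x (fun n => (q (φ n)).1.1) l0 (fun n => (q (φ n)).2.1) hl0 hconv'
    obtain ⟨B, hB⟩ := (evolDomain_compact T).exists_bound_of_continuousOn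
      ((hES l0 hl0).strong_cont x)
    rw [Metric.tendstoUniformlyOn_iff] at hTU
    obtain ⟨N, hN⟩ := (hTU 1 one_pos).exists_forall_of_atTop
    obtain ⟨n, hnN, hnB⟩ : ∃ n : ℕ, N ≤ n ∧ B + 1 ≤ (n : ℝ) := by
      obtain ⟨m, hm⟩ := exists_nat_ge (B + 1)
      exact ⟨max N m, le_max_left _ _, hm.trans (Nat.cast_le.2 (le_max_right _ _))⟩
    have hp : (q (φ n)).1.2 ∈ evolDomain T := ((q (φ n)).2).2
    have hd := hN n hnN _ hp
    have hBp : ‖g (q (φ n)) x‖ ≤ B + 1 := evol_norm_le_of_dist (hB _ hp) hd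
    have hlt : (B + 1 : ℝ) < ‖g (q (φ n)) x‖ :=
      lt_of_le_of_lt (hnB.trans (by exact_mod_cast Nat.cast_le.2 (hφ.le_apply))) (hq (φ n))
    exact absurd (hlt.trans_le hBp) (lt_irrefl _)
  obtain ⟨C, hC⟩ := banach_steinhaus hpt
  refine ⟨max C 0, le_max_right _ _, fun lam hlam p hp => ?_⟩
  exact le_trans (hC ⟨(lam, p), hlam, hp⟩) (le_max_left _ _)

/-- Uniform (in the parameter and in vectors from a compact set) equicontinuity of a
continuous family of evolution systems on its compact parameter domain. -/
lemma evol_unif [CompleteSpace E] (T : ℝ) (R : ℝ → ℝ → ℝ → E →L[ℝ] E)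
    (hES : ∀ lam ∈ Icc (0 : ℝ) 1, IsEvolutionSystem T (R lam))
    (hcont : IsContinuousEvolFamily T R)
    (M : ℝ) (hM0 : 0 ≤ M)
    (hM : ∀ lam ∈ Icc (0 : ℝ) 1, ∀ p ∈ evolDomain T, ‖R lam p.1 p.2‖ ≤ M)
    {P : Set E} (hP : IsCompact P) {ε : ℝ} (hε : 0 < ε) :
    ∃ δ > 0, ∀ lam ∈ Icc (0 : ℝ) 1, ∀ p ∈ evolDomain T, ∀ q ∈ evolDomain T,
      dist p q < δ → ∀ y ∈ P, ‖R lam p.1 p.2 y - R lam q.1 q.2 y‖ ≤ ε := by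
  by_contra hcon
  push_neg at hcon
  have hsel : ∀ n : ℕ, ∃ lam ∈ Icc (0:ℝ) 1, ∃ p ∈ evolDomain T, ∃ q ∈ evolDomain T,
      dist p q < 1/(n+1) ∧ ∃ y ∈ P, ε < ‖R lam p.1 p.2 y - R lam q.1 q.2 y‖ := by
    intro n
    have := hcon (1/(n+1)) (by positivity)
    obtain ⟨lam, hlam, p, hp, q, hq, hd, y, hy, hgt⟩ := this
    exact ⟨lam, hlam, p, hp, q, hq, hd, y, hy, hgt⟩
  choose lam hlam p hp q hq hdist y hy hgt using hsel
  have hK3 : IsCompact ((Icc (0:ℝ) 1) ×ˢ (evolDomain T ×ˢ P)) :=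
    isCompact_Icc.prod ((evolDomain_compact T).prod hP)
  obtain ⟨z0, hz0, φ, hφ, hzconv⟩ := hK3.tendsto_subseq
    (x := fun n => (lam n, p n, y n)) (fun n => ⟨hlam n, hp n, hy n⟩)
  obtain ⟨l0, p0, y0⟩ := z0
  obtain ⟨hl0, hp0, hy0⟩ : l0 ∈ Icc (0:ℝ) 1 ∧ p0 ∈ evolDomain T ∧ y0 ∈ P := by
    simpa [Set.mem_prod] using hz0
  have hlt : Tendsto (fun n => lam (φ n)) atTop (𝓝 l0) :=
    (continuous_fst.tendsto _).comp hzconv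
  have hpt : Tendsto (fun n => p (φ n)) atTop (𝓝 p0) :=
    ((continuous_fst.comp continuous_snd).tendsto _).comp hzconv
  have hyt : Tendsto (fun n => y (φ n)) atTop (𝓝 y0) :=
    ((continuous_snd.comp continuous_snd).tendsto _).comp hzconv
  have hqt : Tendsto (fun n => q (φ n)) atTop (𝓝 p0) := by
    rw [tendsto_iff_dist_tendsto_zero]
    have hb : ∀ n, dist (q (φ n)) p0 ≤ 1/(φ n + 1) + dist (p (φ n)) p0 := by
      intro n
      calc dist (q (φ n)) p0 ≤ dist (q (φ n)) (p (φ n)) + dist (p (φ n)) p0 :=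
            dist_triangle _ _ _
        _ ≤ 1/(φ n + 1) + dist (p (φ n)) p0 := by
            have := (hdist (φ n)).le
            rw [dist_comm]
            linarith
    have h1 : Tendsto (fun n => 1/((φ n : ℝ) + 1)) atTop (𝓝 0) :=
      tendsto_one_div_add_atTop_nhds_zero_nat.comp hφ.tendsto_atTop
    have h2 : Tendsto (fun n => dist (p (φ n)) p0) atTop (𝓝 0) :=
      tendsto_iff_dist_tendsto_zero.mp hpt
    have h3 : Tendsto (fun n => 1/((φ n : ℝ) + 1) + dist (p (φ n)) p0) atTop (𝓝 0) := by
      simpa using h1.add h2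
    exact squeeze_zero (fun n => dist_nonneg) hb h3
  set ε6 := ε / 6 with hε6def
  have hε6 : 0 < ε6 := by positivity
  have hεM : 0 < ε6 / (M + 1) := by positivity
  have hTU := hcont y0 (fun n => lam (φ n)) l0 (fun n => hlam (φ n)) hl0 hlt
  rw [Metric.tendstoUniformlyOn_iff] at hTU
  have E2 := hTU ε6 hε6
  have hcw : ContinuousWithinAt (fun p' : ℝ × ℝ => R l0 p'.1 p'.2 y0) (evolDomain T) p0 :=
    ((hES l0 hl0).strong_cont y0) p0 hp0
  have E3p : Tendsto (fun n => R l0 (p (φ n)).1 (p (φ n)).2 y0) atTop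
      (𝓝 (R l0 p0.1 p0.2 y0)) :=
    hcw.tendsto.comp (tendsto_nhdsWithin_iff.mpr ⟨hpt, Eventually.of_forall fun n => hp (φ n)⟩)
  have E3q : Tendsto (fun n => R l0 (q (φ n)).1 (q (φ n)).2 y0) atTop
      (𝓝 (R l0 p0.1 p0.2 y0)) :=
    hcw.tendsto.comp (tendsto_nhdsWithin_iff.mpr ⟨hqt, Eventually.of_forall fun n => hq (φ n)⟩)
  have E1 : ∀ᶠ n in atTop, dist (y (φ n)) y0 < ε6 / (M + 1) :=
    hyt (Metric.ball_mem_nhds y0 hεM)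
  have E3p' : ∀ᶠ n in atTop,
      dist (R l0 (p (φ n)).1 (p (φ n)).2 y0) (R l0 p0.1 p0.2 y0) < ε6 :=
    E3p (Metric.ball_mem_nhds _ hε6)
  have E3q' : ∀ᶠ n in atTop,
      dist (R l0 (q (φ n)).1 (q (φ n)).2 y0) (R l0 p0.1 p0.2 y0) < ε6 :=
    E3q (Metric.ball_mem_nhds _ hε6)
  have hMkey : M * (ε6 / (M + 1)) ≤ ε6 := by
    have h1 : M / (M + 1) ≤ 1 := div_le_one_of_le₀ (by linarith) (by linarith)
    calc M * (ε6 / (M + 1)) = M / (M + 1) * ε6 := by ring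
      _ ≤ 1 * ε6 := mul_le_mul_of_nonneg_right h1 hε6.le
      _ = ε6 := one_mul _
  have hfinal : ∀ᶠ n in atTop,
      ‖R (lam (φ n)) (p (φ n)).1 (p (φ n)).2 (y (φ n))
        - R (lam (φ n)) (q (φ n)).1 (q (φ n)).2 (y (φ n))‖ ≤ ε := by
    filter_upwards [E1, E2, E3p', E3q'] with n h1 h2 h3 h4
    set Ln := lam (φ n)
    set pn := p (φ n)
    set qn := q (φ n)
    set yn := y (φ n)
    have hMp : ∀ u v : E, ‖R Ln pn.1 pn.2 u - R Ln pn.1 pn.2 v‖ ≤ M * ‖u - v‖ := by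
      intro u v
      rw [← map_sub]
      exact le_trans ((R Ln pn.1 pn.2).le_opNorm _)
        (mul_le_mul_of_nonneg_right (hM Ln (hlam (φ n)) pn (hp (φ n))) (norm_nonneg _))
    have hMq : ∀ u v : E, ‖R Ln qn.1 qn.2 u - R Ln qn.1 qn.2 v‖ ≤ M * ‖u - v‖ := by
      intro u v
      rw [← map_sub]
      exact le_trans ((R Ln qn.1 qn.2).le_opNorm _)
        (mul_le_mul_of_nonneg_right (hM Ln (hlam (φ n)) qn (hq (φ n))) (norm_nonneg _))
    have d01 : dist (R Ln pn.1 pn.2 yn) (R Ln pn.1 pn.2 y0) ≤ ε6 := by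
      rw [dist_eq_norm]
      refine le_trans (hMp yn y0) (le_trans ?_ hMkey)
      exact mul_le_mul_of_nonneg_left (by rw [← dist_eq_norm]; exact h1.le) hM0
    have d12 : dist (R Ln pn.1 pn.2 y0) (R l0 pn.1 pn.2 y0) ≤ ε6 := by
      rw [dist_comm]; exact (h2 pn (hp (φ n))).le
    have d23 : dist (R l0 pn.1 pn.2 y0) (R l0 p0.1 p0.2 y0) ≤ ε6 := h3.le
    have d34 : dist (R l0 p0.1 p0.2 y0) (R l0 qn.1 qn.2 y0) ≤ ε6 := by
      rw [dist_comm]; exact h4.le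
    have d45 : dist (R l0 qn.1 qn.2 y0) (R Ln qn.1 qn.2 y0) ≤ ε6 := (h2 qn (hq (φ n))).le
    have d56 : dist (R Ln qn.1 qn.2 y0) (R Ln qn.1 qn.2 yn) ≤ ε6 := by
      rw [dist_eq_norm]
      refine le_trans (hMq y0 yn) (le_trans ?_ hMkey)
      refine mul_le_mul_of_nonneg_left ?_ hM0
      rw [← dist_eq_norm, dist_comm]
      exact h1.le
    rw [← dist_eq_norm]
    calc dist (R Ln pn.1 pn.2 yn) (R Ln qn.1 qn.2 yn)
        ≤ dist (R Ln pn.1 pn.2 yn) (R l0 p0.1 p0.2 y0)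
          + dist (R l0 p0.1 p0.2 y0) (R Ln qn.1 qn.2 yn) := dist_triangle _ _ _
      _ ≤ (dist (R Ln pn.1 pn.2 yn) (R Ln pn.1 pn.2 y0)
            + dist (R Ln pn.1 pn.2 y0) (R l0 pn.1 pn.2 y0)
            + dist (R l0 pn.1 pn.2 y0) (R l0 p0.1 p0.2 y0))
          + (dist (R l0 p0.1 p0.2 y0) (R l0 qn.1 qn.2 y0)
            + dist (R l0 qn.1 qn.2 y0) (R Ln qn.1 qn.2 y0)
            + dist (R Ln qn.1 qn.2 y0) (R Ln qn.1 qn.2 yn)) :=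
          add_le_add (dist_triangle4 _ _ _ _) (dist_triangle4 _ _ _ _)
      _ ≤ ε6 + ε6 + ε6 + (ε6 + ε6 + ε6) := by
          refine add_le_add (add_le_add (add_le_add d01 d12) d23)
            (add_le_add (add_le_add d34 d45) d56)
      _ = ε := by rw [hε6def]; ring
  obtain ⟨n, hn⟩ := hfinal.exists
  exact absurd (hgt (φ n)) (not_lt.mpr hn)

/-- Joint continuity of `(s, y) ↦ R^{(λ)}(t,s)y`. -/
lemma evol_joint_cont (T : ℝ) (R : ℝ → ℝ → ℝ → E →L[ℝ] E)
    (hES : ∀ lam ∈ Icc (0 : ℝ) 1, IsEvolutionSystem T (R lam))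
    {lam : ℝ} (hlam : lam ∈ Icc (0 : ℝ) 1)
    (M : ℝ) (hM0 : 0 ≤ M)
    (hM : ∀ lam ∈ Icc (0 : ℝ) 1, ∀ p ∈ evolDomain T, ‖R lam p.1 p.2‖ ≤ M)
    {t : ℝ} (ht : t ∈ Icc (0 : ℝ) T) :
    ContinuousOn (fun q : ℝ × E => R lam t q.1 q.2) (Icc (0 : ℝ) t ×ˢ univ) := by
  rw [Metric.continuousOn_iff]
  rintro ⟨s₀, y₀⟩ ⟨hs₀, -⟩ ε hε
  have hεM : 0 < ε / (2 * (M + 1)) := by positivity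
  have hmem : ∀ τ ∈ Icc (0:ℝ) t, (t, τ) ∈ evolDomain T := fun τ hτ => ⟨hτ.1, hτ.2, ht.2⟩
  have hsc : ContinuousOn (fun τ : ℝ => R lam t τ y₀) (Icc 0 t) := by
    have h1 := (hES lam hlam).strong_cont y₀
    exact h1.comp ((continuous_const.prodMk continuous_id).continuousOn) hmem
  rw [Metric.continuousOn_iff] at hsc
  obtain ⟨δ₁, hδ₁, hsc'⟩ := hsc s₀ hs₀ (ε/2) (by positivity)
  refine ⟨min δ₁ (ε / (2 * (M + 1))), lt_min hδ₁ hεM, ?_⟩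
  rintro ⟨s, y⟩ ⟨hs, -⟩ hd
  have hds1 : dist s s₀ ≤ dist ((s, y) : ℝ × E) ((s₀, y₀) : ℝ × E) := by
    rw [Prod.dist_eq]; exact le_max_left _ _
  have hdy1 : dist y y₀ ≤ dist ((s, y) : ℝ × E) ((s₀, y₀) : ℝ × E) := by
    rw [Prod.dist_eq]; exact le_max_right _ _
  have hds : dist s s₀ < δ₁ :=
    lt_of_le_of_lt hds1 (lt_of_lt_of_le hd (min_le_left _ _))
  have hdy : dist y y₀ ≤ ε / (2 * (M + 1)) :=
    le_trans hdy1 (le_of_lt (lt_of_lt_of_le hd (min_le_right _ _)))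
  have h1 : dist (R lam t s y) (R lam t s y₀) ≤ ε / 2 := by
    rw [dist_eq_norm, ← map_sub]
    calc ‖R lam t s (y - y₀)‖ ≤ ‖R lam t s‖ * ‖y - y₀‖ := (R lam t s).le_opNorm _
      _ ≤ M * (ε / (2 * (M + 1))) := by
          refine mul_le_mul (hM lam hlam (t, s) (hmem s hs)) ?_ (norm_nonneg _) hM0
          rw [← dist_eq_norm]; exact hdy
      _ ≤ ε / 2 := by
          rw [div_mul_eq_div_div]
          have h2 : M / (M + 1) ≤ 1 := div_le_one_of_le₀ (by linarith) (by linarith)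
          calc M * (ε / 2 / (M + 1)) = M / (M + 1) * (ε / 2) := by ring
            _ ≤ 1 * (ε / 2) := mul_le_mul_of_nonneg_right h2 (by positivity)
            _ = ε / 2 := one_mul _
  have h2 : dist (R lam t s y₀) (R lam t s₀ y₀) < ε / 2 := hsc' s hs hds
  calc dist (R lam t s y) (R lam t s₀ y₀)
      ≤ dist (R lam t s y) (R lam t s y₀) + dist (R lam t s y₀) (R lam t s₀ y₀) :=
        dist_triangle _ _ _
    _ < ε := by linarith

lemma evol_integrableOn (T : ℝ) (R : ℝ → ℝ → ℝ → E →L[ℝ] E)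
    (hES : ∀ lam ∈ Icc (0 : ℝ) 1, IsEvolutionSystem T (R lam))
    {lam : ℝ} (hlam : lam ∈ Icc (0 : ℝ) 1)
    (M : ℝ) (hM0 : 0 ≤ M)
    (hM : ∀ lam ∈ Icc (0 : ℝ) 1, ∀ p ∈ evolDomain T, ‖R lam p.1 p.2‖ ≤ M)
    {t : ℝ} (ht : t ∈ Icc (0 : ℝ) T)
    {w : ℝ → E} (hw : IntegrableOn w (Icc (0 : ℝ) T)) :
    IntegrableOn (fun s => R lam t s (w s)) (Icc (0 : ℝ) t) := by
  have hsub : Icc (0:ℝ) t ⊆ Icc 0 T := Icc_subset_Icc le_rfl ht.2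
  have hg : ContinuousOn (fun q : ℝ × E => R lam t q.1 q.2) (Icc (0 : ℝ) t ×ˢ univ) :=
    evol_joint_cont T R hES hlam M hM0 hM ht
  set clamp : ℝ → ℝ := fun s => min (max s 0) t with hclampdef
  have hclamp_cont : Continuous clamp :=
    (continuous_id.max continuous_const).min continuous_const
  have hclamp_mem : ∀ q : ℝ × E, (clamp q.1, q.2) ∈ Icc (0 : ℝ) t ×ˢ univ := by
    intro q
    exact ⟨⟨le_min (le_max_right _ _) ht.1, min_le_right _ _⟩, mem_univ _⟩
  have hcont : Continuous (fun q : ℝ × E => R lam t (clamp q.1) q.2) := by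
    have := hg.comp_continuous ((hclamp_cont.comp continuous_fst).prodMk continuous_snd)
      hclamp_mem
    exact this
  have hwm : AEStronglyMeasurable w (volume.restrict (Icc (0:ℝ) t)) :=
    (hw.mono_set hsub).aestronglyMeasurable
  have hpair : AEStronglyMeasurable (fun s => (s, w s)) (volume.restrict (Icc (0:ℝ) t)) :=
    aestronglyMeasurable_id.prodMk hwm
  have haesm : AEStronglyMeasurable (fun s => R lam t (clamp s) (w s))
      (volume.restrict (Icc (0:ℝ) t)) := hcont.comp_aestronglyMeasurable hpair
  have haesm' : AEStronglyMeasurable (fun s => R lam t s (w s))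
      (volume.restrict (Icc (0:ℝ) t)) := by
    refine haesm.congr ?_
    filter_upwards [ae_restrict_mem measurableSet_Icc] with s hs
    have : clamp s = s := by
      rw [hclampdef]
      simp only [max_eq_left hs.1, min_eq_left hs.2]
    rw [this]
  have hint : IntegrableOn (fun s => M * ‖w s‖) (Icc (0:ℝ) t) :=
    MeasureTheory.IntegrableOn.mono_set ((hw.norm).const_mul M) hsub
  refine Integrable.mono' hint haesm' ?_
  filter_upwards [ae_restrict_mem measurableSet_Icc] with s hs
  calc ‖R lam t s (w s)‖ ≤ ‖R lam t s‖ * ‖w s‖ := (R lam t s).le_opNorm _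
    _ ≤ M * ‖w s‖ :=
        mul_le_mul_of_nonneg_right (hM lam hlam (t, s) ⟨hs.1, hs.2, ht.2⟩) (norm_nonneg _)

lemma evol_intervalIntegrable (T : ℝ) (R : ℝ → ℝ → ℝ → E →L[ℝ] E)
    (hES : ∀ lam ∈ Icc (0 : ℝ) 1, IsEvolutionSystem T (R lam))
    {lam : ℝ} (hlam : lam ∈ Icc (0 : ℝ) 1)
    (M : ℝ) (hM0 : 0 ≤ M)
    (hM : ∀ lam ∈ Icc (0 : ℝ) 1, ∀ p ∈ evolDomain T, ‖R lam p.1 p.2‖ ≤ M)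
    {a b t : ℝ} (ha : 0 ≤ a) (hab : a ≤ b) (hbt : b ≤ t) (ht : t ∈ Icc (0 : ℝ) T)
    {w : ℝ → E} (hw : IntegrableOn w (Icc (0 : ℝ) T)) :
    IntervalIntegrable (fun s => R lam t s (w s)) volume a b := by
  refine IntegrableOn.intervalIntegrable ?_
  rw [uIcc_of_le hab]
  exact MeasureTheory.IntegrableOn.mono_set
    (evol_integrableOn T R hES hlam M hM0 hM ht hw)
    (Icc_subset_Icc ha hbt)

lemma evol_decomp [CompleteSpace E] (T : ℝ) (R : ℝ → ℝ → ℝ → E →L[ℝ] E)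
    (hES : ∀ lam ∈ Icc (0 : ℝ) 1, IsEvolutionSystem T (R lam))
    {lam : ℝ} (hlam : lam ∈ Icc (0 : ℝ) 1)
    (M : ℝ) (hM0 : 0 ≤ M)
    (hM : ∀ lam ∈ Icc (0 : ℝ) 1, ∀ p ∈ evolDomain T, ‖R lam p.1 p.2‖ ≤ M)
    {a t : ℝ} (ha : 0 ≤ a) (hat : a ≤ t) (htT : t ≤ T) (x : E)
    {w : ℝ → E} (hw : IntegrableOn w (Icc (0 : ℝ) T)) :
    evolMap (R lam) x w t
      = R lam t a (evolMap (R lam) x w a) + ∫ s in a..t, R lam t s (w s) := by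
  have htI : t ∈ Icc (0:ℝ) T := ⟨ha.trans hat, htT⟩
  have haI : a ∈ Icc (0:ℝ) T := ⟨ha, hat.trans htT⟩
  have hIa : IntervalIntegrable (fun s => R lam a s (w s)) volume 0 a :=
    evol_intervalIntegrable T R hES hlam M hM0 hM le_rfl ha le_rfl haI hw
  have hI1 : IntervalIntegrable (fun s => R lam t s (w s)) volume 0 a :=
    evol_intervalIntegrable T R hES hlam M hM0 hM le_rfl ha hat htI hw
  have hI2 : IntervalIntegrable (fun s => R lam t s (w s)) volume a t :=
    evol_intervalIntegrable T R hES hlam M hM0 hM ha hat le_rfl htI hw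
  have hcomp0 : R lam t a (R lam a 0 x) = R lam t 0 x := by
    rw [(hES lam hlam).comp le_rfl ha hat htT]; rfl
  have hint : R lam t a (∫ s in (0:ℝ)..a, R lam a s (w s))
      = ∫ s in (0:ℝ)..a, R lam t s (w s) := by
    rw [← (R lam t a).intervalIntegral_comp_comm hIa]
    refine intervalIntegral.integral_congr ?_
    intro s hs
    rw [uIcc_of_le ha] at hs
    show R lam t a (R lam a s (w s)) = R lam t s (w s)
    rw [(hES lam hlam).comp hs.1 hs.2 hat htT]; rfl
  rw [evolMap, evolMap, map_add, hcomp0, hint, add_assoc,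
    intervalIntegral.integral_add_adjacent_intervals hI1 hI2]

/-- Key uniform modulus-of-continuity estimate. -/
lemma evol_key [CompleteSpace E] (T : ℝ) (R : ℝ → ℝ → ℝ → E →L[ℝ] E)
    (hES : ∀ lam ∈ Icc (0 : ℝ) 1, IsEvolutionSystem T (R lam))
    (hcont : IsContinuousEvolFamily T R)
    (M : ℝ) (hM0 : 0 ≤ M)
    (hM : ∀ lam ∈ Icc (0 : ℝ) 1, ∀ p ∈ evolDomain T, ‖R lam p.1 p.2‖ ≤ M)
    {ι : Type*} (xs : ι → E) (ws : ι → ℝ → E) (ls : ι → ℝ)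
    (hls : ∀ i, ls i ∈ Icc (0 : ℝ) 1)
    (hwint : ∀ i, IntegrableOn (ws i) (Icc (0 : ℝ) T))
    (c : ℝ → ℝ) (hc : IntegrableOn c (Icc (0 : ℝ) T))
    (hdom : ∀ i, ∀ᵐ s ∂(volume.restrict (Icc (0 : ℝ) T)), ‖ws i s‖ ≤ c s)
    (hpt : ∀ a ∈ Icc (0:ℝ) T, ∃ P : Set E, IsCompact P ∧
      ∀ i, evolMap (R (ls i)) (xs i) (ws i) a ∈ P)
    {t₀ : ℝ} (ht₀ : t₀ ∈ Icc (0 : ℝ) T) {ε : ℝ} (hε : 0 < ε) :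
    ∃ δ > 0, ∀ i, ∀ t ∈ Icc (0:ℝ) T, ∀ t' ∈ Icc (0:ℝ) T,
      |t - t₀| < δ → |t' - t₀| < δ →
      dist (evolMap (R (ls i)) (xs i) (ws i) t) (evolMap (R (ls i)) (xs i) (ws i) t') ≤ ε := by
  have hT0 : (0:ℝ) ≤ T := ht₀.1.trans ht₀.2
  have hcint : ∀ p q : ℝ, 0 ≤ p → p ≤ q → q ≤ T → IntervalIntegrable c volume p q := by
    intro p q hp hpq hqT
    refine IntegrableOn.intervalIntegrable ?_
    rw [uIcc_of_le hpq]
    exact MeasureTheory.IntegrableOn.mono_set hc (Icc_subset_Icc hp hqT)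
  set ε' := ε / (8 * (M + 1)) with hε'def
  have hε' : 0 < ε' := by positivity
  set G : ℝ → ℝ := fun b => ∫ s in (0:ℝ)..b, c s with hGdef
  have hGcont : ContinuousOn G (Icc 0 T) := by
    have := intervalIntegral.continuousOn_primitive_interval
      (a := (0:ℝ)) (b := T) (μ := volume) (f := c) (by rw [uIcc_of_le hT0]; exact hc)
    rwa [uIcc_of_le hT0] at this
  have hGt₀ := hGcont t₀ ht₀
  rw [Metric.continuousWithinAt_iff] at hGt₀
  obtain ⟨δ₁, hδ₁, hG⟩ := hGt₀ ε' hε'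
  set a := max (t₀ - δ₁/2) 0 with hadef
  have ha0 : 0 ≤ a := le_max_right _ _
  have hat₀ : a ≤ t₀ := max_le (by linarith) ht₀.1
  have haI : a ∈ Icc (0:ℝ) T := ⟨ha0, hat₀.trans ht₀.2⟩
  have hadist : dist a t₀ < δ₁ := by
    rw [Real.dist_eq, abs_of_nonpos (by linarith)]
    have : t₀ - δ₁/2 ≤ a := le_max_left _ _
    linarith
  obtain ⟨P, hPc, hPmem⟩ := hpt a haI
  obtain ⟨δ₂, hδ₂, hUC⟩ := evol_unif T R hES hcont M hM0 hM hPc (half_pos hε)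
  refine ⟨min (δ₁/2) (δ₂/2), lt_min (by linarith) (by linarith), ?_⟩
  have key : ∀ i, ∀ t ∈ Icc (0:ℝ) T, ∀ t' ∈ Icc (0:ℝ) T,
      |t - t₀| < min (δ₁/2) (δ₂/2) → |t' - t₀| < min (δ₁/2) (δ₂/2) → t' ≤ t →
      dist (evolMap (R (ls i)) (xs i) (ws i) t) (evolMap (R (ls i)) (xs i) (ws i) t') ≤ ε := by
    intro i t ht t' ht' hdt hdt' htt'
    have hdt1 : |t - t₀| < δ₁/2 := lt_of_lt_of_le hdt (min_le_left _ _)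
    have hdt2 : |t - t₀| < δ₂/2 := lt_of_lt_of_le hdt (min_le_right _ _)
    have hdt'1 : |t' - t₀| < δ₁/2 := lt_of_lt_of_le hdt' (min_le_left _ _)
    have hdt'2 : |t' - t₀| < δ₂/2 := lt_of_lt_of_le hdt' (min_le_right _ _)
    have habs : t₀ - t' < δ₁/2 := by
      have := abs_lt.mp hdt'1
      linarith [this.1]
    have hat' : a ≤ t' := max_le (by linarith) ht'.1
    have hat : a ≤ t := hat'.trans htt'
    set u := evolMap (R (ls i)) (xs i) (ws i) with hudef
    have eq1 : u t = R (ls i) t a (u a) + ∫ s in a..t, R (ls i) t s (ws i s) :=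
      evol_decomp T R hES (hls i) M hM0 hM ha0 hat ht.2 (xs i) (hwint i)
    have eq2 : u t' = R (ls i) t' a (u a) + ∫ s in a..t', R (ls i) t' s (ws i s) :=
      evol_decomp T R hES (hls i) M hM0 hM ha0 hat' ht'.2 (xs i) (hwint i)
    have hpD : ((t, a) : ℝ × ℝ) ∈ evolDomain T := ⟨ha0, hat, ht.2⟩
    have hqD : ((t', a) : ℝ × ℝ) ∈ evolDomain T := ⟨ha0, hat', ht'.2⟩
    have hdpq : dist ((t, a) : ℝ × ℝ) ((t', a) : ℝ × ℝ) < δ₂ := by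
      rw [Prod.dist_eq]
      simp only [dist_self]
      rw [max_eq_left dist_nonneg, Real.dist_eq]
      have : |t - t'| ≤ |t - t₀| + |t₀ - t'| := abs_sub_le _ _ _
      rw [abs_sub_comm t₀ t'] at this
      linarith
    have hop : ‖R (ls i) t a (u a) - R (ls i) t' a (u a)‖ ≤ ε/2 :=
      hUC (ls i) (hls i) (t, a) hpD (t', a) hqD hdpq (u a) (hPmem i)
    have hintbd : ∀ b : ℝ, b ∈ Icc (0:ℝ) T → a ≤ b → |b - t₀| < δ₁ →
        ‖∫ s in a..b, R (ls i) b s (ws i s)‖ ≤ ε/4 := by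
      intro b hb hab hbd
      have hbound : ‖∫ s in a..b, R (ls i) b s (ws i s)‖ ≤ |∫ s in a..b, M * c s| := by
        refine intervalIntegral.norm_integral_le_abs_of_norm_le ?_ ?_
        · have hsub : uIoc a b ⊆ Icc (0:ℝ) T := by
            rw [uIoc_of_le hab]
            exact (Ioc_subset_Icc_self).trans (Icc_subset_Icc ha0 hb.2)
          filter_upwards [ae_restrict_of_ae_restrict_of_subset hsub (hdom i),
            ae_restrict_mem measurableSet_uIoc] with s h1 h2
          rw [uIoc_of_le hab] at h2
          calc ‖R (ls i) b s (ws i s)‖ ≤ ‖R (ls i) b s‖ * ‖ws i s‖ :=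
                (R (ls i) b s).le_opNorm _
            _ ≤ M * c s := mul_le_mul
                (hM (ls i) (hls i) (b, s) ⟨ha0.trans h2.1.le, h2.2, hb.2⟩)
                h1 (norm_nonneg _) hM0
        · exact (hcint a b ha0 hab hb.2).const_mul M
      have hGeq : ∫ s in a..b, c s = G b - G a := by
        rw [hGdef]
        have := intervalIntegral.integral_add_adjacent_intervals
          (hcint 0 a le_rfl ha0 haI.2) (hcint a b ha0 hab hb.2)
        linarith [this]
      have hGb : dist (G b) (G t₀) < ε' := hG hb (by rwa [Real.dist_eq])
      have hGa : dist (G a) (G t₀) < ε' := hG haI hadist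
      have habs2 : |∫ s in a..b, c s| < 2 * ε' := by
        rw [hGeq]
        calc |G b - G a| = dist (G b) (G a) := (Real.dist_eq _ _).symm
          _ ≤ dist (G b) (G t₀) + dist (G t₀) (G a) := dist_triangle _ _ _
          _ < ε' + ε' := by rw [dist_comm (G t₀)]; exact add_lt_add hGb hGa
          _ = 2 * ε' := by ring
      calc ‖∫ s in a..b, R (ls i) b s (ws i s)‖ ≤ |∫ s in a..b, M * c s| := hbound
        _ = M * |∫ s in a..b, c s| := by
            rw [intervalIntegral.integral_const_mul, abs_mul, abs_of_nonneg hM0]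
        _ ≤ M * (2 * ε') := mul_le_mul_of_nonneg_left habs2.le hM0
        _ ≤ ε/4 := by
            rw [hε'def]
            have h3 : M * (2 * (ε / (8 * (M + 1)))) = M * ε / (4 * (M + 1)) := by
              have hM1 : (M:ℝ) + 1 ≠ 0 := by linarith
              field_simp; ring
            have h4 : M * ε / (4 * (M + 1)) ≤ ε / 4 := by
              rw [div_le_div_iff₀ (by positivity) (by norm_num)]
              nlinarith
            linarith
    have hint1 : ‖∫ s in a..t, R (ls i) t s (ws i s)‖ ≤ ε/4 :=
      hintbd t ht hat (lt_of_lt_of_le hdt1 (by linarith))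
    have hint2 : ‖∫ s in a..t', R (ls i) t' s (ws i s)‖ ≤ ε/4 :=
      hintbd t' ht' hat' (lt_of_lt_of_le hdt'1 (by linarith))
    rw [dist_eq_norm, eq1, eq2]
    have hre : (R (ls i) t a (u a) + ∫ s in a..t, R (ls i) t s (ws i s))
        - (R (ls i) t' a (u a) + ∫ s in a..t', R (ls i) t' s (ws i s))
        = (R (ls i) t a (u a) - R (ls i) t' a (u a))
          + ((∫ s in a..t, R (ls i) t s (ws i s))
            - (∫ s in a..t', R (ls i) t' s (ws i s))) := by abel
    rw [hre]
    calc ‖(R (ls i) t a (u a) - R (ls i) t' a (u a))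
          + ((∫ s in a..t, R (ls i) t s (ws i s))
            - (∫ s in a..t', R (ls i) t' s (ws i s)))‖
        ≤ ‖R (ls i) t a (u a) - R (ls i) t' a (u a)‖
          + ‖(∫ s in a..t, R (ls i) t s (ws i s))
            - (∫ s in a..t', R (ls i) t' s (ws i s))‖ := norm_add_le _ _
      _ ≤ ‖R (ls i) t a (u a) - R (ls i) t' a (u a)‖
          + (‖∫ s in a..t, R (ls i) t s (ws i s)‖
            + ‖∫ s in a..t', R (ls i) t' s (ws i s)‖) := by
          gcongr
          exact norm_sub_le _ _
      _ ≤ ε/2 + (ε/4 + ε/4) := by gcongr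
      _ = ε := by ring
  intro i t ht t' ht' hdt hdt'
  rcases le_total t' t with h | h
  · exact key i t ht t' ht' hdt hdt' h
  · rw [dist_comm]
    exact key i t' ht' t ht hdt' hdt h

/-- Continuity of `t ↦ Σ(x,w,λ)(t)` on `[0,T]`. -/
lemma evol_continuousOn [CompleteSpace E] (T : ℝ) (R : ℝ → ℝ → ℝ → E →L[ℝ] E)
    (hES : ∀ lam ∈ Icc (0 : ℝ) 1, IsEvolutionSystem T (R lam))
    (hcont : IsContinuousEvolFamily T R)
    (M : ℝ) (hM0 : 0 ≤ M)
    (hM : ∀ lam ∈ Icc (0 : ℝ) 1, ∀ p ∈ evolDomain T, ‖R lam p.1 p.2‖ ≤ M)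
    {lam : ℝ} (hlam : lam ∈ Icc (0 : ℝ) 1) (x : E)
    {w : ℝ → E} (hw : IntegrableOn w (Icc (0 : ℝ) T)) :
    ContinuousOn (evolMap (R lam) x w) (Icc (0 : ℝ) T) := by
  intro t₀ ht₀
  rw [Metric.continuousWithinAt_iff]
  intro ε hε
  obtain ⟨δ, hδ, hkey⟩ := evol_key T R hES hcont M hM0 hM (ι := Unit)
    (fun _ => x) (fun _ => w) (fun _ => lam) (fun _ => hlam) (fun _ => hw)
    (fun s => ‖w s‖) hw.norm (fun _ => Eventually.of_forall fun s => le_rfl)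
    (fun a _ => ⟨{evolMap (R lam) x w a}, isCompact_singleton,
      fun _ => Set.mem_singleton _⟩)
    ht₀ (half_pos hε)
  refine ⟨δ, hδ, fun {t} ht hd => ?_⟩
  have h0 : |t₀ - t₀| < δ := by
    simpa using hδ
  have := hkey Unit.unit t ht t₀ ht₀ (by rwa [Real.dist_eq] at hd) h0
  exact lt_of_le_of_lt this (half_lt_self hε)

theorem statement_4
    {E : Type*} [NormedAddCommGroup E] [NormedSpace ℝ E] [CompleteSpace E]
    (T : ℝ) (hT : 0 < T)
    (R : ℝ → ℝ → ℝ → E →L[ℝ] E)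
    (hES : ∀ lam ∈ Icc (0 : ℝ) 1, IsEvolutionSystem T (R lam))
    (hcont : IsContinuousEvolFamily T R)
    (K : Set E) (hK : IsCompact (closure K))
    (W : Set (ℝ → E))
    (hWint : ∀ w ∈ W, IntegrableOn w (Icc (0 : ℝ) T))
    (c : ℝ → ℝ) (hc : IntegrableOn c (Icc (0 : ℝ) T))
    (hdom : ∀ w ∈ W, ∀ᵐ t ∂(volume.restrict (Icc (0 : ℝ) T)), ‖w t‖ ≤ c t) :
    IsCompact (closure {u : C(Icc (0 : ℝ) T, E) |
        ∃ x ∈ K, ∃ w ∈ W, ∃ lam ∈ Icc (0 : ℝ) 1,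
          ∀ t : Icc (0 : ℝ) T, u t = evolMap (R lam) x w ↑t}) ↔
      ∀ t ∈ Icc (0 : ℝ) T, IsCompact (closure {y : E |
        ∃ x ∈ K, ∃ w ∈ W, ∃ lam ∈ Icc (0 : ℝ) 1, y = evolMap (R lam) x w t}) := by
  obtain ⟨M, hM0, hM⟩ := evol_bound T R hES hcont
  set S := {u : C(Icc (0 : ℝ) T, E) |
      ∃ x ∈ K, ∃ w ∈ W, ∃ lam ∈ Icc (0 : ℝ) 1,
        ∀ t : Icc (0 : ℝ) T, u t = evolMap (R lam) x w ↑t} with hSdef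
  constructor
  · -- compactness in C([0,T],E) implies pointwise compactness
    intro hS t ht
    have hsub : {y : E | ∃ x ∈ K, ∃ w ∈ W, ∃ lam ∈ Icc (0 : ℝ) 1,
        y = evolMap (R lam) x w t} ⊆ (fun u : C(Icc (0:ℝ) T, E) => u ⟨t, ht⟩) '' S := by
      rintro y ⟨x, hx, w, hw, lam, hlam, rfl⟩
      have hcf : Continuous ((Icc (0:ℝ) T).restrict (evolMap (R lam) x w)) :=
        (evol_continuousOn T R hES hcont M hM0 hM hlam x (hWint w hw)).restrict
      exact ⟨⟨_, hcf⟩, ⟨x, hx, w, hw, lam, hlam, fun τ => rfl⟩, rfl⟩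
    have hev : Continuous (fun u : C(Icc (0:ℝ) T, E) => u ⟨t, ht⟩) :=
      continuous_eval_const _
    have himg : IsCompact ((fun u : C(Icc (0:ℝ) T, E) => u ⟨t, ht⟩) '' closure S) :=
      hS.image hev
    exact himg.of_isClosed_subset isClosed_closure
      (closure_minimal (hsub.trans (image_mono subset_closure)) himg.isClosed)
  · -- pointwise compactness implies compactness in C([0,T],E), via Arzelà-Ascoli
    intro hptc
    have hchoice : ∀ u : S, ∃ x ∈ K, ∃ w ∈ W, ∃ lam ∈ Icc (0:ℝ) 1,
        ∀ τ : Icc (0:ℝ) T, (u : C(Icc (0:ℝ) T, E)) τ = evolMap (R lam) x w ↑τ :=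
      fun u => u.2
    choose xs hxs ws hws ls hls hspec using hchoice
    have hptP : ∀ a ∈ Icc (0:ℝ) T, ∃ P : Set E, IsCompact P ∧
        ∀ i : S, evolMap (R (ls i)) (xs i) (ws i) a ∈ P := by
      intro a ha
      refine ⟨closure {y : E | ∃ x ∈ K, ∃ w ∈ W, ∃ lam ∈ Icc (0 : ℝ) 1,
        y = evolMap (R lam) x w a}, hptc a ha, fun i => subset_closure ?_⟩
      exact ⟨xs i, hxs i, ws i, hws i, ls i, hls i, rfl⟩
    -- equicontinuity
    have heq : Equicontinuous (fun i : S => ((i : C(Icc (0:ℝ) T, E)) : Icc (0:ℝ) T → E)) := by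
      intro x₀
      rw [Metric.equicontinuousAt_iff]
      intro ε hε
      obtain ⟨δ, hδ, hkey⟩ := evol_key T R hES hcont M hM0 hM
        xs ws ls hls (fun i => hWint _ (hws i)) c hc (fun i => hdom _ (hws i)) hptP
        (t₀ := (x₀ : ℝ)) x₀.2 (half_pos hε)
      refine ⟨δ, hδ, fun x hx i => ?_⟩
      have hd : |(x : ℝ) - (x₀ : ℝ)| < δ := by
        rw [← Real.dist_eq, ← Subtype.dist_eq]
        exact hx
      have h0 : |(x₀ : ℝ) - (x₀ : ℝ)| < δ := by simpa using hδ
      have := hkey i (x₀ : ℝ) x₀.2 (x : ℝ) x.2 h0 hd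
      rw [hspec i x₀, hspec i x]
      exact lt_of_le_of_lt this (half_lt_self hε)
    -- apply Arzelà-Ascoli
    have hcemb : IsClosedEmbedding
        (UniformOnFun.ofFun {K : Set (Icc (0:ℝ) T) | IsCompact K} ∘
          (fun u : C(Icc (0:ℝ) T, E) => (u : Icc (0:ℝ) T → E))) := by
      refine ⟨ContinuousMap.isUniformEmbedding_toUniformOnFunIsCompact.isEmbedding, ?_⟩
      have hrg : range (UniformOnFun.ofFun {K : Set (Icc (0:ℝ) T) | IsCompact K} ∘
          (fun u : C(Icc (0:ℝ) T, E) => (u : Icc (0:ℝ) T → E)))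
          = {f : UniformOnFun (Icc (0:ℝ) T) E {K : Set (Icc (0:ℝ) T) | IsCompact K} |
              Continuous (UniformOnFun.toFun _ f)} :=
        ContinuousMap.range_toUniformOnFunIsCompact
      rw [hrg]
      exact UniformOnFun.isClosed_setOf_continuous CompactlyCoherentSpace.isCoherentWith
    refine ArzelaAscoli.isCompact_closure_of_isClosedEmbedding
      (fun Kc hKc => hKc) hcemb (fun Kc _ => ?_) (fun Kc _ p _ => ?_)
    · exact (heq.equicontinuousOn _ : _)
    · refine ⟨closure {y : E | ∃ x' ∈ K, ∃ w ∈ W, ∃ lam ∈ Icc (0 : ℝ) 1,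
        y = evolMap (R lam) x' w (p : ℝ)}, hptc (p : ℝ) p.2, fun u hu => ?_⟩
      obtain ⟨xx, hxx, ww, hww, ll, hll, hspec'⟩ := hu
      exact subset_closure ⟨xx, hxx, ww, hww, ll, hll, hspec' p⟩

end
end

section
/- Let T>0, E a Banach space, and {R^{(λ)}}_{λ∈[0,1]} a continuous family of evolution systems on E such that ‖R^{(λ)}(t,s)‖ ≤ M e^{ω(t−s)} for all 0≤s≤t≤T and λ∈[0,1], where M>0 and ω∈ℝ are constants. Then for every bounded set Q⊂E and all s,t∈[0,T] with s≤t, β({R^{(λ)}(t,s)x : x∈Q, λ∈[0,1]}) ≤ M e^{ω(t−s)} β(Q). -/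
open Filter Topology Set MeasureTheory

noncomputable section

variable {E : Type*} [NormedAddCommGroup E] [NormedSpace ℝ E]

/-- Lemma 4: if `‖R^{(λ)}(t,s)‖ ≤ M e^{ω(t−s)}` for a continuous family of
evolution systems, then for every bounded `Q ⊆ E` and `0 ≤ s ≤ t ≤ T`,
`β({R^{(λ)}(t,s)x : x ∈ Q, λ ∈ [0,1]}) ≤ M e^{ω(t−s)} β(Q)`. -/
theorem statement_5
    {E : Type*} [NormedAddCommGroup E] [NormedSpace ℝ E] [CompleteSpace E]
    (T : ℝ) (hT : 0 < T)
    (R : ℝ → ℝ → ℝ → E →L[ℝ] E)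
    (hES : ∀ lam ∈ Icc (0 : ℝ) 1, IsEvolutionSystem T (R lam))
    (hcont : IsContinuousEvolFamily T R)
    (M ω : ℝ) (hM : 0 < M)
    (hbound : ∀ lam ∈ Icc (0 : ℝ) 1, ∀ s t : ℝ, 0 ≤ s → s ≤ t → t ≤ T →
      ‖R lam t s‖ ≤ M * Real.exp (ω * (t - s)))
    (Q : Set E) (hQ : Bornology.IsBounded Q)
    (s t : ℝ) (hs : 0 ≤ s) (hst : s ≤ t) (htT : t ≤ T) :
    hausdorffMNC {y : E | ∃ x ∈ Q, ∃ lam ∈ Icc (0 : ℝ) 1, y = R lam t s x} ≤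
      M * Real.exp (ω * (t - s)) * hausdorffMNC Q := by
  classical
  set K := M * Real.exp (ω * (t - s)) with hKdef
  have hKpos : 0 < K := mul_pos hM (Real.exp_pos _)
  set S := {y : E | ∃ x ∈ Q, ∃ lam ∈ Icc (0 : ℝ) 1, y = R lam t s x} with hSdef
  have hβQ0 : 0 ≤ hausdorffMNC Q :=
    Real.sInf_nonneg (fun r hr => hr.1.le)
  have hbddS : BddBelow {r : ℝ | 0 < r ∧ ∃ c : Finset E, S ⊆ ⋃ y ∈ c, Metric.ball y r} :=
    ⟨0, fun r hr => hr.1.le⟩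
  -- continuity in lam
  have hcl : ∀ y : E, ContinuousOn (fun lam => R lam t s y) (Icc (0 : ℝ) 1) := by
    intro y lam0 hlam0
    rw [ContinuousWithinAt, tendsto_iff_seq_tendsto]
    intro u hu
    have humem : ∀ᶠ n in atTop, u n ∈ Icc (0 : ℝ) 1 := hu self_mem_nhdsWithin
    set v : ℕ → ℝ := fun n => if u n ∈ Icc (0 : ℝ) 1 then u n else lam0 with hvdef
    have hvmem : ∀ n, v n ∈ Icc (0 : ℝ) 1 := by
      intro n; simp only [hvdef]; split <;> [assumption; exact hlam0]
    have huv : u =ᶠ[atTop] v := by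
      filter_upwards [humem] with n hn
      simp [hvdef, hn.1, hn.2]
    have hvt : Tendsto v atTop (𝓝 lam0) :=
      (hu.mono_right nhdsWithin_le_nhds).congr' huv
    have huni := hcont y v lam0 hvmem hlam0 hvt
    have hts : ((t, s) : ℝ × ℝ) ∈ evolDomain T := ⟨hs, hst, htT⟩
    have hptw : Tendsto (fun n => R (v n) t s y) atTop (𝓝 (R lam0 t s y)) :=
      huni.tendsto_at hts
    refine hptw.congr' ?_
    filter_upwards [huv] with n hn
    simp [hn]
  -- finite covers of the compact sets {R lam t s y : lam ∈ [0,1]}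
  refine le_of_forall_pos_le_add ?_
  intro ε hε
  have hcov : ∀ y : E, ∃ d : Finset E,
      (fun lam => R lam t s y) '' Icc (0 : ℝ) 1 ⊆ ⋃ z ∈ d, Metric.ball z (ε / 2) := by
    intro y
    have hcpt : IsCompact ((fun lam => R lam t s y) '' Icc (0 : ℝ) 1) :=
      isCompact_Icc.image_of_continuousOn (hcl y)
    obtain ⟨d0, hd0fin, hd0⟩ :=
      Metric.totallyBounded_iff.mp hcpt.totallyBounded (ε / 2) (by positivity)
    exact ⟨hd0fin.toFinset, by simpa using hd0⟩
  choose d hd using hcov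
  -- a cover of Q of radius close to hausdorffMNC Q
  have hne : {r : ℝ | 0 < r ∧ ∃ c : Finset E, Q ⊆ ⋃ y ∈ c, Metric.ball y r}.Nonempty := by
    obtain ⟨ρ, hρ⟩ := hQ.subset_closedBall 0
    refine ⟨max ρ 0 + 1, by positivity, {0}, hρ.trans ?_⟩
    intro x hx
    simp only [Finset.mem_singleton, Set.mem_iUnion]
    refine ⟨0, rfl, ?_⟩
    simp only [Metric.mem_ball]
    calc dist x 0 ≤ ρ := Metric.mem_closedBall.mp hx
      _ ≤ max ρ 0 := le_max_left _ _
      _ < max ρ 0 + 1 := by linarith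
  obtain ⟨r, hr, hrlt⟩ := Real.lt_sInf_add_pos hne (show (0:ℝ) < ε / (2 * K) by positivity)
  obtain ⟨hrpos, c, hc⟩ := hr
  have hrlt' : r < hausdorffMNC Q + ε / (2 * K) := hrlt
  -- final cover of S
  have hKr : K * r < K * hausdorffMNC Q + ε / 2 := by
    have := mul_lt_mul_of_pos_left hrlt' hKpos
    have hKK : K * (ε / (2 * K)) = ε / 2 := by
      field_simp
    calc K * r < K * (hausdorffMNC Q + ε / (2 * K)) := this
      _ = K * hausdorffMNC Q + ε / 2 := by rw [mul_add, hKK]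
  have hmem : (K * hausdorffMNC Q + ε) ∈
      {ρ : ℝ | 0 < ρ ∧ ∃ c : Finset E, S ⊆ ⋃ y ∈ c, Metric.ball y ρ} := by
    refine ⟨by nlinarith, c.biUnion d, ?_⟩
    rintro y ⟨x, hxQ, lam, hlam, rfl⟩
    obtain ⟨y0, hy0c, hy0⟩ : ∃ y0 ∈ c, x ∈ Metric.ball y0 r := by
      have := hc hxQ
      simpa using this
    obtain ⟨z, hzd, hz⟩ : ∃ z ∈ d y0, R lam t s y0 ∈ Metric.ball z (ε / 2) := by
      have : R lam t s y0 ∈ (fun l => R l t s y0) '' Icc (0 : ℝ) 1 :=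
        ⟨lam, hlam, rfl⟩
      have := hd y0 this
      simpa using this
    simp only [Set.mem_iUnion, Finset.mem_biUnion]
    refine ⟨z, ⟨y0, hy0c, hzd⟩, ?_⟩
    have h1 : dist (R lam t s x) (R lam t s y0) ≤ K * dist x y0 := by
      have : R lam t s x - R lam t s y0 = R lam t s (x - y0) := by
        rw [map_sub]
      rw [dist_eq_norm, dist_eq_norm, this]
      calc ‖R lam t s (x - y0)‖ ≤ ‖R lam t s‖ * ‖x - y0‖ := (R lam t s).le_opNorm _
        _ ≤ K * ‖x - y0‖ := by
            apply mul_le_mul_of_nonneg_right (hbound lam hlam s t hs hst htT) (norm_nonneg _)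
    have h2 : dist x y0 < r := Metric.mem_ball.mp hy0
    have h3 : dist (R lam t s y0) z < ε / 2 := Metric.mem_ball.mp hz
    have h4 : K * dist x y0 < K * r := mul_lt_mul_of_pos_left h2 hKpos
    have := dist_triangle (R lam t s x) (R lam t s y0) z
    refine Metric.mem_ball.mpr ?_
    calc dist (R lam t s x) z ≤ dist (R lam t s x) (R lam t s y0) + dist (R lam t s y0) z :=
        dist_triangle _ _ _
      _ < K * r + ε / 2 := by linarith
      _ < K * hausdorffMNC Q + ε := by linarith
  calc hausdorffMNC S ≤ K * hausdorffMNC Q + ε := csInf_le hbddS hmem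
    _ = M * Real.exp (ω * (t - s)) * hausdorffMNC Q + ε := by rw [hKdef]
end
end
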